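/- (Lemma 2.3) Suppose ε_H ∈ (0,1), ⟨v, ∇²f(x) v⟩ ≥ ε_H ‖v‖² for all v ∈ ℝⁿ, ‖∇f(x)‖ ≤ U_g with U_g > 0, ∇f(x) ≠ 0, and let d solve ∇²f(x) d = -∇f(x) (the Newton direction). Then the smallest nonnegative integer j_k such that f(x + θ^{j_k} d) < f(x) - (η/6) θ^{3 j_k} ‖d‖³ exists and satisfies j_k ≤ [log_θ( √(3/(L_H+η)) · ε_H/√U_g )]_+ + 1, and moreover f(x) - f(x + θ^{j_k} d) ≥ (η/6)·min{(2/L_H)^{3/2}, (3θ/(L_H+η))³} · min{‖∇f(x + θ^{j_k} d)‖^{3/2}, ε_H³}. -/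

import Mathlib

open scoped RealInnerProductSpace

/-- MVT with polynomial bound on derivative. -/
lemma mvt_pow_bound {E : Type*} [NormedAddCommGroup E] [NormedSpace ℝ E]
    (φ φ' : ℝ → E) (hd : ∀ t, HasDerivAt φ (φ' t) t) (C : ℝ) (k : ℕ)
    (bound : ∀ t ∈ Set.Icc (0:ℝ) 1, ‖φ' t‖ ≤ C * t ^ k) :
    ‖φ 1 - φ 0‖ ≤ C / (k + 1) := by
  have key : ∀ y ∈ Set.Icc (0:ℝ) 1, ‖φ y - φ 0‖ ≤ C / (k+1) * y ^ (k+1) := by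
    apply image_norm_le_of_norm_deriv_right_le_deriv_boundary
      (f := fun t => φ t - φ 0) (f' := φ') (B := fun t => C / (k+1) * t ^ (k+1))
      (B' := fun t => C * t ^ k)
    · exact (HasDerivAt.continuousOn (fun s _ => hd s)).sub continuousOn_const
    · intro t _; exact ((hd t).sub_const (φ 0)).hasDerivWithinAt
    · simp
    · intro t
      have h1 : HasDerivAt (fun t : ℝ => C / (k+1) * t ^ (k+1))
          (C / (k+1) * ((k+1) * t ^ k)) t := by
        exact (hasDerivAt_pow (k+1) t).const_mul _ |>.congr_deriv (by push_cast; ring)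
      convert h1 using 1
      have : ((k:ℝ) + 1) ≠ 0 := by positivity
      field_simp
    · intro t ht; exact bound t ⟨ht.1, ht.2.le⟩
  have := key 1 (by norm_num)
  simpa using this

variable {n : ℕ}

/-- First-order Taylor bound on the gradient. -/
lemma taylor_grad_bound
    (gradf : EuclideanSpace ℝ (Fin n) → EuclideanSpace ℝ (Fin n))
    (hessf : EuclideanSpace ℝ (Fin n) → EuclideanSpace ℝ (Fin n) →L[ℝ] EuclideanSpace ℝ (Fin n))
    (hhess : ∀ x, HasFDerivAt gradf (hessf x) x)
    (L_H : ℝ)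
    (hlip : ∀ x y, ‖hessf x - hessf y‖ ≤ L_H * ‖x - y‖)
    (x p : EuclideanSpace ℝ (Fin n)) :
    ‖gradf (x + p) - gradf x - hessf x p‖ ≤ L_H / 2 * ‖p‖ ^ 2 := by
  have hline : ∀ t : ℝ, HasDerivAt (fun t : ℝ => x + t • p) p t := by
    intro t
    simpa using ((hasDerivAt_id t).smul_const p).const_add x
  have hφ : ∀ t : ℝ, HasDerivAt (fun t : ℝ => gradf (x + t • p) - t • hessf x p)
      (hessf (x + t • p) p - hessf x p) t := by
    intro t
    exact ((hhess (x + t • p)).comp_hasDerivAt t (hline t)).sub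
      (by simpa using (hasDerivAt_id t).smul_const (hessf x p))
  have key := mvt_pow_bound _ _ hφ (L_H * ‖p‖ ^ 2) 1 ?_
  · have h2 : L_H * ‖p‖ ^ 2 / ((1:ℕ) + 1) = L_H / 2 * ‖p‖ ^ 2 := by push_cast; ring
    rw [h2] at key
    simpa [sub_sub, add_comm] using key
  · intro t ht
    have h1 : hessf (x + t • p) p - hessf x p = (hessf (x + t • p) - hessf x) p := by simp
    rw [h1]
    calc ‖(hessf (x + t • p) - hessf x) p‖ ≤ ‖hessf (x + t • p) - hessf x‖ * ‖p‖ :=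
          (hessf (x + t • p) - hessf x).le_opNorm p
      _ ≤ (L_H * ‖t • p‖) * ‖p‖ := by
          have := hlip (x + t • p) x
          simp only [add_sub_cancel_left] at this
          have hp : (0:ℝ) ≤ ‖p‖ := norm_nonneg _
          nlinarith [norm_nonneg (t • p)]
      _ = L_H * ‖p‖ ^ 2 * t ^ 1 := by
          rw [norm_smul, Real.norm_eq_abs, abs_of_nonneg ht.1]; ring

/-- Second-order Taylor upper bound on the function value. -/
lemma taylor_value_bound
    (f : EuclideanSpace ℝ (Fin n) → ℝ)
    (gradf : EuclideanSpace ℝ (Fin n) → EuclideanSpace ℝ (Fin n))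
    (hessf : EuclideanSpace ℝ (Fin n) → EuclideanSpace ℝ (Fin n) →L[ℝ] EuclideanSpace ℝ (Fin n))
    (hgrad : ∀ x, HasGradientAt f (gradf x) x)
    (hhess : ∀ x, HasFDerivAt gradf (hessf x) x)
    (L_H : ℝ)
    (hlip : ∀ x y, ‖hessf x - hessf y‖ ≤ L_H * ‖x - y‖)
    (x p : EuclideanSpace ℝ (Fin n)) :
    f (x + p) ≤ f x + ⟪gradf x, p⟫ + 1/2 * ⟪p, hessf x p⟫ + L_H/6 * ‖p‖^3 := by
  have hline : ∀ t : ℝ, HasDerivAt (fun t : ℝ => x + t • p) p t := by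
    intro t
    simpa using ((hasDerivAt_id t).smul_const p).const_add x
  set ψ : ℝ → ℝ := fun t => f (x + t • p) - t * ⟪gradf x, p⟫ - t^2/2 * ⟪p, hessf x p⟫ with hψ
  have hψ' : ∀ t : ℝ, HasDerivAt ψ
      (⟪gradf (x + t • p) - gradf x - t • hessf x p, p⟫) t := by
    intro t
    have h1 : HasDerivAt (fun t : ℝ => f (x + t • p)) ⟪gradf (x + t • p), p⟫ t := by
      have := ((hgrad (x + t • p)).hasFDerivAt).comp_hasDerivAt t (hline t)
      simp at this; exact this
    have h2 : HasDerivAt (fun t : ℝ => t * ⟪gradf x, p⟫) ⟪gradf x, p⟫ t := by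
      simpa using (hasDerivAt_id t).mul_const (⟪gradf x, p⟫)
    have h3 : HasDerivAt (fun t : ℝ => t^2/2 * ⟪p, hessf x p⟫) (t * ⟪p, hessf x p⟫) t := by
      have := ((hasDerivAt_pow 2 t).div_const 2).mul_const (⟪p, hessf x p⟫)
      refine this.congr_deriv ?_
      push_cast; ring
    have := (h1.sub h2).sub h3
    refine this.congr_deriv ?_
    simp only [inner_sub_left, real_inner_smul_left]
    rw [real_inner_comm p ((hessf x) p)]
  have key := mvt_pow_bound ψ _ hψ' (L_H/2 * ‖p‖^3) 2 ?_
  · have h6 : L_H/2 * ‖p‖^3 / ((2:ℕ)+1) = L_H/6 * ‖p‖^3 := by push_cast; ring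
    rw [h6] at key
    have hval : ψ 1 - ψ 0 = f (x + p) - f x - ⟪gradf x, p⟫ - 1/2 * ⟪p, hessf x p⟫ := by
      simp [hψ]; ring
    rw [hval] at key
    have := abs_le.1 (by rwa [Real.norm_eq_abs] at key)
    linarith [this.2]
  · intro t ht
    have hcs := abs_real_inner_le_norm (gradf (x + t • p) - gradf x - t • hessf x p) p
    have htg : ‖gradf (x + t • p) - gradf x - t • hessf x p‖ ≤ L_H/2 * (t * ‖p‖)^2 := by
      have := taylor_grad_bound gradf hessf hhess L_H hlip x (t • p)
      rw [map_smul] at this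
      simpa [norm_smul, abs_of_nonneg ht.1] using this
    rw [Real.norm_eq_abs]
    calc |⟪gradf (x + t • p) - gradf x - t • hessf x p, p⟫|
        ≤ ‖gradf (x + t • p) - gradf x - t • hessf x p‖ * ‖p‖ := hcs
      _ ≤ (L_H/2 * (t * ‖p‖)^2) * ‖p‖ := by
          have hp : (0:ℝ) ≤ ‖p‖ := norm_nonneg _
          nlinarith [norm_nonneg (gradf (x + t • p) - gradf x - t • hessf x p)]
      _ = L_H/2 * ‖p‖^3 * t^2 := by ring

set_option maxHeartbeats 1000000 in
/-- Lemma 2.3: line search along the Newton direction. -/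
theorem newton_step_linesearch
    {n : ℕ} (f : EuclideanSpace ℝ (Fin n) → ℝ)
    (gradf : EuclideanSpace ℝ (Fin n) → EuclideanSpace ℝ (Fin n))
    (hessf : EuclideanSpace ℝ (Fin n) → EuclideanSpace ℝ (Fin n) →L[ℝ] EuclideanSpace ℝ (Fin n))
    (hf : ContDiff ℝ 2 f)
    (hgrad : ∀ x, HasGradientAt f (gradf x) x)
    (hhess : ∀ x, HasFDerivAt gradf (hessf x) x)
    (L_H : ℝ) (hLH : 0 < L_H)
    (hlip : ∀ x y, ‖hessf x - hessf y‖ ≤ L_H * ‖x - y‖)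
    (θ η ε_H U_g : ℝ) (hθ : θ ∈ Set.Ioo (0:ℝ) 1) (hη : 0 < η)
    (hεH : ε_H ∈ Set.Ioo (0:ℝ) 1) (hUg : 0 < U_g)
    (x d : EuclideanSpace ℝ (Fin n))
    (hpd : ∀ v : EuclideanSpace ℝ (Fin n), ε_H * ‖v‖^2 ≤ ⟪v, hessf x v⟫)
    (hgb : ‖gradf x‖ ≤ U_g) (hgne : gradf x ≠ 0)
    (hnewton : hessf x d = -gradf x) :
    ∃ jk : ℕ,
      (f (x + θ^jk • d) < f x - η/6 * θ^(3*jk) * ‖d‖^3) ∧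
      (∀ j : ℕ, j < jk → ¬ (f (x + θ^j • d) < f x - η/6 * θ^(3*j) * ‖d‖^3)) ∧
      (jk : ℝ) ≤ max (Real.logb θ (Real.sqrt (3/(L_H+η)) * ε_H / Real.sqrt U_g)) 0 + 1 ∧
      f x - f (x + θ^jk • d) ≥
        η/6 * min ((2/L_H)^((3:ℝ)/2)) ((3*θ/(L_H+η))^3) *
          min (‖gradf (x + θ^jk • d)‖^((3:ℝ)/2)) (ε_H^3) := by
  classical
  obtain ⟨hθ0, hθ1⟩ := hθ
  obtain ⟨hε0, hε1⟩ := hεH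
  have hLη : 0 < L_H + η := by linarith
  have hd0 : d ≠ 0 := by
    intro h
    apply hgne
    have h2 := hnewton
    rw [h, map_zero] at h2
    simpa using h2.symm
  have hD : 0 < ‖d‖ := norm_pos_iff.2 hd0
  have hdHd : ε_H * ‖d‖^2 ≤ ⟪d, hessf x d⟫ := hpd d
  have hinner : ⟪gradf x, d⟫ = -⟪d, hessf x d⟫ := by
    rw [hnewton, inner_neg_right, neg_neg, real_inner_comm]
  have hεDg : ε_H * ‖d‖ ≤ ‖gradf x‖ := by
    have hcs : ⟪d, hessf x d⟫ ≤ ‖d‖ * ‖gradf x‖ := by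
      rw [hnewton]
      calc ⟪d, -gradf x⟫ ≤ |⟪d, -gradf x⟫| := le_abs_self _
        _ ≤ ‖d‖ * ‖-gradf x‖ := abs_real_inner_le_norm _ _
        _ = ‖d‖ * ‖gradf x‖ := by rw [norm_neg]
    nlinarith
  have hεDU : ε_H * ‖d‖ ≤ U_g := le_trans hεDg hgb
  -- Taylor upper bound along the ray
  have upper : ∀ α : ℝ, 0 ≤ α → α ≤ 1 →
      f (x + α • d) ≤ f x - α*(1-α/2)*(ε_H * ‖d‖^2) + L_H/6 * α^3 * ‖d‖^3 := by
    intro α h0 h1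
    have hT := taylor_value_bound f gradf hessf hgrad hhess L_H hlip x (α • d)
    rw [real_inner_smul_right] at hT
    have h2 : ⟪α • d, hessf x (α • d)⟫ = α^2 * ⟪d, hessf x d⟫ := by
      rw [map_smul, real_inner_smul_left, real_inner_smul_right]; ring
    have h3 : ‖α • d‖ = α * ‖d‖ := by
      rw [norm_smul, Real.norm_eq_abs, abs_of_nonneg h0]
    rw [h2, h3, hinner] at hT
    have h4 : 0 ≤ α * (1 - α/2) := by nlinarith
    nlinarith [hdHd, mul_le_mul_of_nonneg_left hdHd h4]
  -- sufficient condition for acceptance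
  have suff : ∀ α : ℝ, 0 < α → α < 1 → α^2 * ‖d‖ ≤ 3*ε_H/(L_H+η) →
      f (x + α • d) < f x - η/6 * α^3 * ‖d‖^3 := by
    intro α h0 h1 h2
    have hu := upper α h0.le h1.le
    have h2' : (L_H+η) * (α^2 * ‖d‖) ≤ 3*ε_H := by
      rw [← le_div_iff₀' hLη]; exact h2
    have hmul := mul_le_mul_of_nonneg_left h2'
      (show (0:ℝ) ≤ α * ‖d‖^2 / 6 by positivity)
    nlinarith [mul_pos (mul_pos h0 hε0) (mul_pos hD hD),
      mul_pos (mul_pos (mul_pos h0 hε0) (mul_pos hD hD)) (show (0:ℝ) < 1 - α by linarith)]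
  -- consequence of failure
  have fail : ∀ α : ℝ, 0 < α → α ≤ 1 →
      ¬ (f (x + α • d) < f x - η/6 * α^3 * ‖d‖^3) → 3*ε_H/(L_H+η) ≤ α * ‖d‖ := by
    intro α h0 h1 hnot
    push_neg at hnot
    have hu := upper α h0.le h1
    have key : 3*(α*ε_H*‖d‖^2) ≤ (L_H+η)*α^3*‖d‖^3 := by
      nlinarith [mul_nonneg (mul_nonneg h0.le (show (0:ℝ) ≤ 1-α by linarith))
        (mul_nonneg hε0.le (sq_nonneg ‖d‖))]
    rw [div_le_iff₀ hLη]
    by_contra hcon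
    push_neg at hcon
    have h5 := mul_lt_mul_of_pos_right hcon (show (0:ℝ) < α^2*‖d‖^2 by positivity)
    have h6 : (0:ℝ) ≤ 3*ε_H*‖d‖^2*α*(1-α) :=
      mul_nonneg (mul_nonneg (by positivity : (0:ℝ) ≤ 3*ε_H*‖d‖^2) h0.le)
        (by linarith : (0:ℝ) ≤ 1-α)
    nlinarith [key, h5, h6]
  set A := Real.sqrt (3/(L_H+η)) * ε_H / Real.sqrt U_g with hA
  have hApos : 0 < A :=
    div_pos (mul_pos (Real.sqrt_pos.2 (by positivity)) hε0) (Real.sqrt_pos.2 hUg)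
  have hAsq : A^2 = 3*ε_H^2/((L_H+η)*U_g) := by
    rw [hA, div_pow, mul_pow, Real.sq_sqrt (by positivity : (0:ℝ) ≤ 3/(L_H+η)),
      Real.sq_sqrt hUg.le]
    field_simp
  have hAD : A^2 * ‖d‖ ≤ 3*ε_H/(L_H+η) := by
    rw [hAsq, div_mul_eq_mul_div, div_le_div_iff₀ (by positivity) hLη]
    nlinarith [mul_le_mul_of_nonneg_left hεDU
      (show (0:ℝ) ≤ 3*ε_H*(L_H+η) by positivity)]
  set J : ℕ := ⌊max (Real.logb θ A) 0⌋₊ + 1 with hJ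
  have hJle : (J:ℝ) ≤ max (Real.logb θ A) 0 + 1 := by
    have := Nat.floor_le (le_max_right (Real.logb θ A) 0)
    rw [hJ]
    push_cast
    linarith
  have hJlog : Real.logb θ A ≤ (J:ℝ) := by
    have h1 : max (Real.logb θ A) 0 < (⌊max (Real.logb θ A) 0⌋₊ : ℝ) + 1 :=
      Nat.lt_floor_add_one _
    have h2 := le_max_left (Real.logb θ A) 0
    rw [hJ]
    push_cast
    linarith
  have hθJA : θ^J ≤ A := by
    calc θ^J = θ^(J:ℝ) := by rw [Real.rpow_natCast]
      _ ≤ θ^(Real.logb θ A) := Real.rpow_le_rpow_of_exponent_ge hθ0 hθ1.le hJlog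
      _ = A := Real.rpow_logb hθ0 hθ1.ne hApos
  have hθJ1 : θ^J < 1 := pow_lt_one₀ hθ0.le hθ1 (by omega)
  have hcube : ∀ j : ℕ, θ^(3*j) = (θ^j)^3 := by
    intro j; rw [mul_comm, pow_mul]
  have hPJ : f (x + θ^J • d) < f x - η/6 * θ^(3*J) * ‖d‖^3 := by
    rw [hcube]
    apply suff (θ^J) (pow_pos hθ0 J) hθJ1
    calc (θ^J)^2 * ‖d‖ ≤ A^2 * ‖d‖ :=
          mul_le_mul_of_nonneg_right (by nlinarith [pow_pos hθ0 J, hθJA]) hD.le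
      _ ≤ 3*ε_H/(L_H+η) := hAD
  have hex : ∃ j : ℕ, f (x + θ^j • d) < f x - η/6 * θ^(3*j) * ‖d‖^3 := ⟨J, hPJ⟩
  refine ⟨Nat.find hex, Nat.find_spec hex, fun j hj => Nat.find_min hex hj, ?_, ?_⟩
  · calc ((Nat.find hex : ℕ):ℝ) ≤ (J:ℝ) := Nat.cast_le.2 (Nat.find_le hPJ)
      _ ≤ _ := hJle
  · set jk := Nat.find hex with hjk
    have hspec : f (x + θ^jk • d) < f x - η/6 * θ^(3*jk) * ‖d‖^3 := Nat.find_spec hex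
    have hdec : η/6 * θ^(3*jk) * ‖d‖^3 ≤ f x - f (x + θ^jk • d) := by linarith
    have hAnn : (0:ℝ) ≤ (2/L_H)^((3:ℝ)/2) := Real.rpow_nonneg (by positivity) _
    have hBnn : (0:ℝ) ≤ (3*θ/(L_H+η))^3 := by positivity
    have hCnn : (0:ℝ) ≤ ‖gradf (x + θ^jk • d)‖^((3:ℝ)/2) := Real.rpow_nonneg (norm_nonneg _) _
    have hDnn : (0:ℝ) ≤ ε_H^3 := by positivity
    rcases Nat.eq_zero_or_pos jk with h0 | hpos
    · -- accepted at the first trial: use the gradient Taylor bound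
      rw [h0] at hdec ⊢
      simp only [pow_zero, one_smul, mul_zero] at hdec ⊢
      have hCnn' : (0:ℝ) ≤ ‖gradf (x + d)‖^((3:ℝ)/2) :=
        Real.rpow_nonneg (norm_nonneg _) _
      have htg := taylor_grad_bound gradf hessf hhess L_H hlip x d
      rw [sub_sub, hnewton, add_neg_cancel, sub_zero] at htg
      have hkey : (2/L_H)^((3:ℝ)/2) * ‖gradf (x+d)‖^((3:ℝ)/2) ≤ ‖d‖^3 := by
        have h1 : 2/L_H * ‖gradf (x+d)‖ ≤ ‖d‖^2 := by
          rw [div_mul_eq_mul_div, div_le_iff₀ hLH]; nlinarith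
        calc (2/L_H)^((3:ℝ)/2) * ‖gradf (x+d)‖^((3:ℝ)/2)
            = (2/L_H * ‖gradf (x+d)‖)^((3:ℝ)/2) :=
              (Real.mul_rpow (by positivity) (norm_nonneg _)).symm
          _ ≤ (‖d‖^2)^((3:ℝ)/2) := Real.rpow_le_rpow (by positivity) h1 (by norm_num)
          _ = ‖d‖^3 := by
              rw [← Real.rpow_natCast ‖d‖ 2, ← Real.rpow_mul hD.le,
                ← Real.rpow_natCast ‖d‖ 3]
              norm_num
      have hchain : min ((2/L_H)^((3:ℝ)/2)) ((3*θ/(L_H+η))^3) *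
          min (‖gradf (x + d)‖^((3:ℝ)/2)) (ε_H^3) ≤ ‖d‖^3 := by
        calc min ((2/L_H)^((3:ℝ)/2)) ((3*θ/(L_H+η))^3) *
            min (‖gradf (x + d)‖^((3:ℝ)/2)) (ε_H^3)
            ≤ (2/L_H)^((3:ℝ)/2) * ‖gradf (x+d)‖^((3:ℝ)/2) := by
              apply mul_le_mul (min_le_left _ _) (min_le_left _ _) (le_min hCnn' hDnn) hAnn
          _ ≤ ‖d‖^3 := hkey
      have h6 : (0:ℝ) ≤ η/6 := by linarith
      calc η/6 * min ((2/L_H)^((3:ℝ)/2)) ((3*θ/(L_H+η))^3) *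
            min (‖gradf (x + d)‖^((3:ℝ)/2)) (ε_H^3)
          = η/6 * (min ((2/L_H)^((3:ℝ)/2)) ((3*θ/(L_H+η))^3) *
            min (‖gradf (x + d)‖^((3:ℝ)/2)) (ε_H^3)) := by ring
        _ ≤ η/6 * ‖d‖^3 := by
            apply mul_le_mul_of_nonneg_left hchain h6
        _ ≤ f x - f (x + d) := by
            simpa using hdec
    · -- jk ≥ 1 : the previous trial failed
      obtain ⟨m, hm⟩ : ∃ m, jk = m + 1 := ⟨jk - 1, by omega⟩
      have hfailm : ¬ (f (x + θ^m • d) < f x - η/6 * θ^(3*m) * ‖d‖^3) :=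
        Nat.find_min hex (by omega)
      rw [hcube] at hfailm
      have hmD : 3*ε_H/(L_H+η) ≤ θ^m * ‖d‖ :=
        fail (θ^m) (pow_pos hθ0 m) (pow_le_one₀ hθ0.le hθ1.le) hfailm
      have hjkD : 3*θ*ε_H/(L_H+η) ≤ θ^jk * ‖d‖ := by
        have : θ^jk = θ * θ^m := by rw [hm, pow_succ]; ring
        rw [this]
        calc 3*θ*ε_H/(L_H+η) = θ * (3*ε_H/(L_H+η)) := by ring
          _ ≤ θ * (θ^m * ‖d‖) := by
              apply mul_le_mul_of_nonneg_left hmD hθ0.le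
          _ = θ * θ^m * ‖d‖ := by ring
      have hposr : (0:ℝ) ≤ 3*θ*ε_H/(L_H+η) := by positivity
      have hkey : (3*θ/(L_H+η))^3 * ε_H^3 ≤ θ^(3*jk) * ‖d‖^3 := by
        have h1 : (3*θ*ε_H/(L_H+η))^3 ≤ (θ^jk * ‖d‖)^3 :=
          pow_le_pow_left₀ hposr hjkD 3
        calc (3*θ/(L_H+η))^3 * ε_H^3 = (3*θ*ε_H/(L_H+η))^3 := by
              field_simp
          _ ≤ (θ^jk * ‖d‖)^3 := h1
          _ = θ^(3*jk) * ‖d‖^3 := by rw [hcube, mul_pow]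
      have hchain : min ((2/L_H)^((3:ℝ)/2)) ((3*θ/(L_H+η))^3) *
          min (‖gradf (x + θ^jk • d)‖^((3:ℝ)/2)) (ε_H^3) ≤ θ^(3*jk) * ‖d‖^3 := by
        calc min ((2/L_H)^((3:ℝ)/2)) ((3*θ/(L_H+η))^3) *
            min (‖gradf (x + θ^jk • d)‖^((3:ℝ)/2)) (ε_H^3)
            ≤ (3*θ/(L_H+η))^3 * ε_H^3 := by
              apply mul_le_mul (min_le_right _ _) (min_le_right _ _) (le_min hCnn hDnn) hBnn
          _ ≤ θ^(3*jk) * ‖d‖^3 := hkey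
      have h6 : (0:ℝ) ≤ η/6 := by linarith
      calc η/6 * min ((2/L_H)^((3:ℝ)/2)) ((3*θ/(L_H+η))^3) *
            min (‖gradf (x + θ^jk • d)‖^((3:ℝ)/2)) (ε_H^3)
          = η/6 * (min ((2/L_H)^((3:ℝ)/2)) ((3*θ/(L_H+η))^3) *
            min (‖gradf (x + θ^jk • d)‖^((3:ℝ)/2)) (ε_H^3)) := by ring
        _ ≤ η/6 * (θ^(3*jk) * ‖d‖^3) := mul_le_mul_of_nonneg_left hchain h6
        _ ≤ f x - f (x + θ^jk • d) := by linarith [hdec]
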